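/- arXiv:1510.04109 — 3 statements merged into one kernel-verified Lean document; each statement's English description precedes it below -/
import Mathlib

section
/- Let B be a skew-symmetric integer matrix indexed by a finite set V and let G : V → ℤ be a grading for B, i.e. for every k ∈ V one has ∑_{j∈V} B_{jk} G_j = 0. Fix k ∈ V and define the mutated grading μ_k(G) by μ_k(G)_i = G_i for i ≠ k and μ_k(G)_k = -G_k + ∑_{j : B_{jk} > 0} B_{jk} G_j. Then μ_k(G) is a grading for the mutated matrix μ_k(B), i.e. ∑_{j∈V} μ_k(B)_{jl} μ_k(G)_j = 0 for all l ∈ V. -/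
lemma half_abs (a c : ℤ) :
    (|a| * c + a * |c|) / 2 =
      if 0 ≤ c then (if 0 < a then a * c else 0)
      else (if a < 0 then -(a * c) else 0) := by
  rcases lt_trichotomy a 0 with ha | rfl | ha
  · rcases le_or_gt 0 c with hc | hc
    · rw [abs_of_neg ha, abs_of_nonneg hc, if_pos hc, if_neg (by omega : ¬ 0 < a)]
      rw [show -a * c + a * c = 0 * 2 by ring, Int.mul_ediv_cancel _ two_ne_zero]
    · rw [abs_of_neg ha, abs_of_neg hc, if_neg (by omega : ¬ 0 ≤ c), if_pos ha]
      rw [show -a * c + a * -c = -(a * c) * 2 by ring, Int.mul_ediv_cancel _ two_ne_zero]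
  · simp
  · rcases le_or_gt 0 c with hc | hc
    · rw [abs_of_pos ha, abs_of_nonneg hc, if_pos hc, if_pos ha]
      rw [show a * c + a * c = a * c * 2 by ring, Int.mul_ediv_cancel _ two_ne_zero]
    · rw [abs_of_pos ha, abs_of_neg hc, if_neg (by omega : ¬ 0 ≤ c), if_neg (by omega : ¬ a < 0)]
      rw [show a * c + a * -c = 0 * 2 by ring, Int.mul_ediv_cancel _ two_ne_zero]

/-- Fomin–Zelevinsky matrix mutation at index `k`. -/
def mutB {V : Type*} [DecidableEq V] (B : V → V → ℤ) (k : V) : V → V → ℤ :=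
  fun i j =>
    if i = k ∨ j = k then -B i j
    else B i j + (|B i k| * B k j + B i k * |B k j|) / 2

/-- Mutation of a grading at index `k`. -/
def mutG {V : Type*} [Fintype V] [DecidableEq V] (B : V → V → ℤ) (G : V → ℤ)
    (k : V) : V → ℤ :=
  fun i =>
    if i = k then -G k + ∑ j ∈ Finset.univ.filter (fun j => 0 < B j k), B j k * G j
    else G i

theorem mutation_grading {V : Type*} [Fintype V] [DecidableEq V]
    (B : V → V → ℤ) (hskew : ∀ i j, B i j = -B j i)
    (G : V → ℤ) (hG : ∀ k, ∑ j, B j k * G j = 0) (k : V) :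
    ∀ l, ∑ j, mutB B k j l * mutG B G k j = 0 := by
  have hBkk : B k k = 0 := by have := hskew k k; omega
  intro l
  by_cases hl : l = k
  · rw [hl]
    have h1 : ∀ j ∈ Finset.univ, mutB B k j k * mutG B G k j = -(B j k * G j) := by
      intro j _
      by_cases hj : j = k
      · subst hj; simp [mutB, mutG, hBkk]
      · simp [mutB, mutG, hj]
    rw [Finset.sum_congr rfl h1, Finset.sum_neg_distrib, hG k, neg_zero]
  · set c := B k l with hc
    set S : ℤ := ∑ j ∈ Finset.univ.filter (fun j => 0 < B j k), B j k * G j with hS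
    -- split off the k term
    rw [← Finset.sum_erase_add _ _ (Finset.mem_univ k)]
    have hk : mutB B k k l * mutG B G k k = -c * (-G k + S) := by
      simp [mutB, mutG, hc, hS]
    have hterm : ∀ j ∈ Finset.univ.erase k,
        mutB B k j l * mutG B G k j
          = B j l * G j + ((|B j k| * c + B j k * |c|) / 2) * G j := by
      intro j hj
      have hj' : j ≠ k := Finset.ne_of_mem_erase hj
      simp only [mutB, mutG, if_neg hj', if_neg (by simp [hj', hl] : ¬ (j = k ∨ l = k))]
      ring
    rw [hk, Finset.sum_congr rfl hterm, Finset.sum_add_distrib]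
    have hBl : ∑ j ∈ Finset.univ.erase k, B j l * G j = -(c * G k) := by
      have h2 : (∑ j ∈ Finset.univ.erase k, B j l * G j) + B k l * G k = 0 := by
        rw [Finset.sum_erase_add Finset.univ _ (Finset.mem_univ k)]; exact hG l
      have hkl : B k l = c := rfl
      linarith
    have he : ∑ j ∈ Finset.univ.erase k, ((|B j k| * c + B j k * |c|) / 2) * G j
        = c * S := by
      have hek : ((|B k k| * c + B k k * |c|) / 2) * G k = 0 := by simp [hBkk]
      have herase : ∑ j ∈ Finset.univ.erase k, (|B j k| * c + B j k * |c|) / 2 * G j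
          = ∑ j : V, (|B j k| * c + B j k * |c|) / 2 * G j :=
        Finset.sum_erase _ hek
      rw [herase]
      rcases le_or_gt 0 c with hcc | hcc
      · have hp : ∀ j ∈ Finset.univ,
            ((|B j k| * c + B j k * |c|) / 2) * G j
              = if 0 < B j k then c * (B j k * G j) else 0 := by
          intro j _
          rw [half_abs, if_pos hcc]
          split_ifs <;> ring
        rw [Finset.sum_congr rfl hp, ← Finset.sum_filter, ← Finset.mul_sum]
      · have hp : ∀ j ∈ Finset.univ,
            ((|B j k| * c + B j k * |c|) / 2) * G j
              = if ¬ 0 < B j k then -c * (B j k * G j) else 0 := by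
          intro j _
          rw [half_abs, if_neg (by omega : ¬ 0 ≤ c)]
          rcases lt_trichotomy (B j k) 0 with h | h | h
          · rw [if_pos h, if_pos (by omega)]; ring
          · rw [if_neg (by omega), if_pos (by omega), h]; ring
          · rw [if_neg (by omega), if_neg (by omega)]; ring
        rw [Finset.sum_congr rfl hp, ← Finset.sum_filter, ← Finset.mul_sum]
        have hsplit := Finset.sum_filter_add_sum_filter_not Finset.univ
          (fun j => 0 < B j k) (fun j => B j k * G j)
        rw [hG k] at hsplit
        have : ∑ j ∈ Finset.univ.filter (fun j => ¬ 0 < B j k), B j k * G j = -S := by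
          rw [← hS] at hsplit; linarith
        rw [this]; ring
    rw [hBl, he]
    ring
end

section
/- Let B be a skew-symmetric integer matrix indexed by a finite set V and k ∈ V. Define the matrices E and F by: E_{ij} = δ_{ij} if j ≠ k, E_{kk} = -1, E_{ik} = max(0, -B_{ik}) for i ≠ k; and F_{ij} = δ_{ij} if i ≠ k, F_{kk} = -1, F_{kj} = max(0, B_{kj}) for j ≠ k. Then the matrix product E·B·F equals the Fomin–Zelevinsky mutation μ_k(B), where μ_k(B)_{ij} = -B_{ij} if i = k or j = k, and μ_k(B)_{ij} = B_{ij} + (|B_{ik}|·B_{kj} + B_{ik}·|B_{kj}|)/2 otherwise. -/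
lemma two_ite_sum {V : Type*} [Fintype V] [DecidableEq V]
    (f : V → ℤ) (c : ℤ) (j k : V) :
    (∑ l, f l * (if l = k then c else if l = j then 1 else 0))
      = f k * c + (if j = k then 0 else f j) := by
  rw [← Finset.add_sum_erase _ (fun l => f l * (if l = k then c else if l = j then 1 else 0))
    (Finset.mem_univ k), if_pos rfl]
  congr 1
  have h : ∀ l ∈ Finset.univ.erase k,
      f l * (if l = k then c else if l = j then 1 else 0) = if l = j then f l else 0 := by
    intro l hl
    rw [if_neg (Finset.mem_erase.mp hl).1]
    split_ifs <;> ring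
  rw [Finset.sum_congr rfl h, Finset.sum_ite_eq' (Finset.univ.erase k) j f]
  by_cases hjk : j = k <;> simp [Finset.mem_erase, hjk]

lemma two_ite_sum' {V : Type*} [Fintype V] [DecidableEq V]
    (h : V → ℤ) (a : ℤ) (i k : V) :
    (∑ m, (if m = k then a else if m = i then 1 else 0) * h m)
      = a * h k + (if i = k then 0 else h i) := by
  rw [Finset.sum_congr rfl fun m _ => mul_comm _ _, two_ite_sum h a i k, mul_comm (h k) a]

lemma key (a b : ℤ) : a * max 0 b + max 0 (-a) * b = (|a| * b + a * |b|) / 2 := by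
  have h2 : |a| * b + a * |b| = 2 * (a * max 0 b + max 0 (-a) * b) := by
    rcases le_or_gt 0 a with ha | ha <;> rcases le_or_gt 0 b with hb | hb
    · rw [abs_of_nonneg ha, abs_of_nonneg hb, max_eq_right hb,
        max_eq_left (by omega : -a ≤ 0)]; ring
    · rw [abs_of_nonneg ha, abs_of_neg hb, max_eq_left hb.le,
        max_eq_left (by omega : -a ≤ 0)]; ring
    · rw [abs_of_neg ha, abs_of_nonneg hb, max_eq_right hb,
        max_eq_right (by omega : (0:ℤ) ≤ -a)]; ring
    · rw [abs_of_neg ha, abs_of_neg hb, max_eq_left hb.le,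
        max_eq_right (by omega : (0:ℤ) ≤ -a)]; ring
  rw [h2, Int.mul_ediv_cancel_left _ two_ne_zero]

theorem mutation_eq_EBF {V : Type*} [Fintype V] [DecidableEq V]
    (B : V → V → ℤ) (hskew : ∀ i j, B i j = -B j i) (k : V) :
    let E : V → V → ℤ := fun i j =>
      if j ≠ k then (if i = j then 1 else 0)
      else if i = k then -1 else max 0 (-B i k)
    let F : V → V → ℤ := fun i j =>
      if i ≠ k then (if i = j then 1 else 0)
      else if j = k then -1 else max 0 (B k j)
    ∀ i j, (∑ m, ∑ l, E i m * B m l * F l j) = mutB B k i j := by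
  intro E F i j
  have hBkk : B k k = 0 := by have := hskew k k; omega
  set a : ℤ := if i = k then -1 else max 0 (-B i k) with ha
  set c : ℤ := if j = k then -1 else max 0 (B k j) with hc
  have hE : ∀ m, E i m = if m = k then a else if m = i then 1 else 0 := by
    intro m
    by_cases hm : m = k
    · rw [hm, if_pos rfl]
      show (if (k ≠ k) then _ else _) = a
      rw [if_neg (not_not_intro rfl)]
    · rw [if_neg hm]
      show (if (m ≠ k) then _ else _) = _
      rw [if_pos hm]
      by_cases him : i = m <;> simp [him, eq_comm]
  have hF : ∀ l, F l j = if l = k then c else if l = j then 1 else 0 := by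
    intro l
    by_cases hl : l = k
    · rw [hl, if_pos rfl]
      show (if (k ≠ k) then _ else _) = c
      rw [if_neg (not_not_intro rfl)]
    · rw [if_neg hl]
      show (if (l ≠ k) then _ else _) = _
      rw [if_pos hl]
  have step : (∑ m, ∑ l, E i m * B m l * F l j)
      = a * (B k k * c + (if j = k then 0 else B k j))
        + (if i = k then 0 else B i k * c + (if j = k then 0 else B i j)) := by
    rw [Finset.sum_congr rfl fun m _ => ?_,
      two_ite_sum' (fun m => B m k * c + (if j = k then 0 else B m j)) a i k]
    rw [show (∑ l, E i m * B m l * F l j)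
        = ∑ l, ((if m = k then a else if m = i then 1 else 0) * B m l)
            * (if l = k then c else if l = j then 1 else 0)
      from Finset.sum_congr rfl fun l _ => by rw [hF l, hE m]]
    rw [two_ite_sum (fun l => (if m = k then a else if m = i then 1 else 0) * B m l) c j k]
    split_ifs <;> ring
  rw [step]
  by_cases hi : i = k <;> by_cases hj : j = k
  · simp [mutB, hi, hj, ha, hc, hBkk]
  · simp [mutB, hi, hj, ha, hc, hBkk]
  · simp [mutB, hi, hj, ha, hc, hBkk]
  · rw [ha, hc, if_neg hi, if_neg hj]
    have hm : mutB B k i j = B i j + (|B i k| * B k j + B i k * |B k j|) / 2 := by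
      simp [mutB, hi, hj]
    rw [hm, ← key (B i k) (B k j), hBkk]
    simp only [if_neg hi, if_neg hj]
    ring
end

section
/- With B skew-symmetric indexed by a finite set V, k ∈ V, and E the matrix defined by E_{ij} = δ_{ij} if j ≠ k, E_{kk} = -1, E_{ik} = max(0, -B_{ik}) for i ≠ k: E is an involution, i.e. E·E is the identity matrix. -/
theorem E_involution {V : Type*} [Fintype V] [DecidableEq V]
    (B : V → V → ℤ) (hskew : ∀ i j, B i j = -B j i) (k : V) :
    let E : V → V → ℤ := fun i j =>
      if j ≠ k then (if i = j then 1 else 0)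
      else if i = k then -1 else max 0 (-B i k)
    ∀ i j, (∑ m, E i m * E m j) = (if i = j then (1 : ℤ) else 0) := by
  intro E i j
  by_cases hj : j = k
  · by_cases hi : i = k
    · rw [Finset.sum_eq_single k]
      · simp [E, hi, hj]
      · intro m _ hm
        simp [E, hm, hj, hi, Ne.symm hm]
      · simp
    · rw [Finset.sum_eq_add i k hi
        (fun m _ hm => by simp [E, hm.2, Ne.symm hm.1, hj])
        (fun h => absurd (Finset.mem_univ i) h)
        (fun h => absurd (Finset.mem_univ k) h)]
      simp [E, hi, hj, fun h => hi (hj ▸ h)]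
  · rw [Finset.sum_eq_single j]
    · simp [E, hj]
    · intro m _ hm
      simp [E, hj, hm]
    · simp
end
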